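/- (Donnelly–Dunkum–Huber–Knupp) For $m \geq 2$, the set of roots of the sign-alternating Fibonacci polynomial $G_m(s) = \sum_{j=0}^{\lfloor m/2 \rfloor} (-1)^j \binom{m-j}{j} s^{\lfloor m/2 \rfloor - j}$ is $\{4\cos^2(j\pi/(m+1)) : 1 \leq j \leq \lfloor m/2 \rfloor\}$. -/
import Mathlib

open Real

noncomputable def signAltFib (m : ℕ) (s : ℝ) : ℝ :=
  ∑ j ∈ Finset.range (m / 2 + 1), (-1 : ℝ) ^ j * ((m - j).choose j : ℝ) * s ^ (m / 2 - j)

/-- Term of the auxiliary Fibonacci-type polynomial. -/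
noncomputable def fibTerm (m j : ℕ) (x : ℝ) : ℝ :=
  (-1 : ℝ) ^ j * ((m - j).choose j : ℝ) * x ^ (m - 2 * j)

noncomputable def fibF (m : ℕ) (x : ℝ) : ℝ := ∑ j ∈ Finset.range (m / 2 + 1), fibTerm m j x

lemma fibF_ext (m M : ℕ) (h : m / 2 + 1 ≤ M) (x : ℝ) :
    fibF m x = ∑ j ∈ Finset.range M, fibTerm m j x := by
  apply Finset.sum_subset (Finset.range_subset_range.2 h)
  intro j _ hj
  simp only [Finset.mem_range, not_lt] at hj
  have : m - j < j := by omega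
  simp [fibTerm, Nat.choose_eq_zero_of_lt this]

lemma fibTerm_step (m j : ℕ) (hj : j ≤ m / 2) (x : ℝ) :
    fibTerm (m + 2) (j + 1) x = x * fibTerm (m + 1) (j + 1) x - fibTerm m j x := by
  have hjm : 2 * j ≤ m := by omega
  unfold fibTerm
  have h1 : m + 2 - (j + 1) = (m - j) + 1 := by omega
  have h2 : m + 1 - (j + 1) = m - j := by omega
  have h3 : m + 2 - 2 * (j + 1) = m - 2 * j := by omega
  rw [h1, h2, h3, Nat.choose_succ_succ]
  push_cast
  rcases lt_or_eq_of_le hjm with hlt | heq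
  · have h4 : m + 1 - 2 * (j + 1) = (m - 2 * j) - 1 := by omega
    rw [h4]
    have hx : x ^ (m - 2 * j) = x * x ^ (m - 2 * j - 1) := by
      rw [← pow_succ']
      congr 1
      omega
    rw [hx]
    ring
  · have hz : m - j < j + 1 := by omega
    rw [Nat.choose_eq_zero_of_lt hz]
    have h6 : m - 2 * j = 0 := by omega
    rw [h6]
    push_cast
    ring

lemma fibF_rec (m : ℕ) (x : ℝ) : fibF (m + 2) x = x * fibF (m + 1) x - fibF m x := by
  have e2 : (m + 2) / 2 + 1 = (m / 2 + 1) + 1 := by omega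
  have e1 : (m + 1) / 2 + 1 ≤ (m / 2 + 1) + 1 := by omega
  rw [fibF_ext (m+2) ((m/2+1)+1) (by omega) x, fibF_ext (m+1) ((m/2+1)+1) e1 x]
  unfold fibF
  rw [Finset.sum_range_succ', Finset.mul_sum, Finset.sum_range_succ' (fun j => x * fibTerm (m+1) j x)]
  have h0 : fibTerm (m + 2) 0 x = x * fibTerm (m + 1) 0 x := by
    simp [fibTerm, pow_succ]; ring
  rw [h0]
  have : ∀ j ∈ Finset.range (m/2+1), fibTerm (m+2) (j+1) x
      = x * fibTerm (m+1) (j+1) x - fibTerm m j x := by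
    intro j hj
    exact fibTerm_step m j (by simpa using Nat.lt_succ_iff.1 (Finset.mem_range.1 hj)) x
  rw [Finset.sum_congr rfl this, Finset.sum_sub_distrib]
  ring

lemma sin_fibF (θ : ℝ) : ∀ m : ℕ, Real.sin ((m + 1) * θ) = Real.sin θ * fibF m (2 * Real.cos θ) := by
  intro m
  induction m using Nat.twoStepInduction with
  | zero => simp [fibF, fibTerm]
  | one =>
    have : ((1:ℕ) + 1 : ℝ) * θ = 2 * θ := by push_cast; ring
    rw [this, Real.sin_two_mul, fibF]
    simp [fibTerm]
    ring
  | more n ih1 ih2 =>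
    have key : Real.sin ((n + 3) * θ) = 2 * Real.cos θ * Real.sin ((n + 2) * θ) - Real.sin ((n + 1) * θ) := by
      have a1 : ((n:ℝ) + 3) * θ = ((n + 2) * θ) + θ := by ring
      have a2 : ((n:ℝ) + 1) * θ = ((n + 2) * θ) - θ := by ring
      rw [a1, a2, Real.sin_add, Real.sin_sub]
      ring
    have c1 : ((n + 2 : ℕ) + 1 : ℝ) = (n : ℝ) + 3 := by push_cast; ring
    have c2 : ((n + 1 : ℕ) + 1 : ℝ) = (n : ℝ) + 2 := by push_cast; ring
    have c3 : ((n : ℕ) + 1 : ℝ) = (n : ℝ) + 1 := by push_cast; ring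
    rw [c1, key, fibF_rec]
    rw [c2] at ih2
    rw [ih2, ih1]
    ring

lemma fibF_eq_signAltFib (m : ℕ) (x : ℝ) :
    fibF m x = x ^ (m % 2) * signAltFib m (x ^ 2) := by
  unfold fibF signAltFib fibTerm
  rw [Finset.mul_sum]
  refine Finset.sum_congr rfl fun j hj => ?_
  have hj' : j ≤ m / 2 := by simpa using Nat.lt_succ_iff.1 (Finset.mem_range.1 hj)
  have : x ^ (m - 2 * j) = x ^ (m % 2) * (x ^ 2) ^ (m / 2 - j) := by
    rw [← pow_mul, ← pow_add]
    congr 1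
    omega
  rw [this]
  ring

lemma signAltFib_root (m j : ℕ) (h1 : 1 ≤ j) (h2 : j ≤ m / 2) :
    signAltFib m (4 * Real.cos (j * π / (m + 1)) ^ 2) = 0 := by
  set θ : ℝ := j * π / (m + 1) with hθ
  have hm1 : (0:ℝ) < (m:ℝ) + 1 := by positivity
  have hθpos : 0 < θ := by
    apply div_pos _ hm1
    have : (0:ℝ) < (j:ℝ) := by exact_mod_cast h1
    positivity
  have hθlt : θ < π / 2 := by
    rw [hθ, div_lt_div_iff₀ hm1 (by norm_num : (0:ℝ) < 2)]
    have h2j : 2 * j ≤ m := by omega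
    have hj : (2 * j : ℝ) ≤ (m : ℝ) := by exact_mod_cast h2j
    nlinarith [Real.pi_pos]
  have hsin0 : Real.sin (((m:ℝ) + 1) * θ) = 0 := by
    have : ((m:ℝ) + 1) * θ = j * π := by
      rw [hθ]; field_simp
    rw [this]
    exact Real.sin_nat_mul_pi j
  have hs := sin_fibF θ m
  rw [hsin0] at hs
  have hsinθ : Real.sin θ ≠ 0 := by
    have := Real.sin_pos_of_pos_of_lt_pi hθpos (by linarith [Real.pi_pos])
    linarith
  have hF : fibF m (2 * Real.cos θ) = 0 := by
    rcases mul_eq_zero.1 hs.symm with h | h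
    · exact absurd h hsinθ
    · exact h
  rw [fibF_eq_signAltFib] at hF
  have hcos : 0 < Real.cos θ :=
    Real.cos_pos_of_mem_Ioo ⟨by linarith [Real.pi_pos], hθlt⟩
  have hx : (2 * Real.cos θ) ^ (m % 2) ≠ 0 := by positivity
  have hG : signAltFib m ((2 * Real.cos θ) ^ 2) = 0 := by
    rcases mul_eq_zero.1 hF with h | h
    · exact absurd h hx
    · exact h
  have : (2 * Real.cos θ) ^ 2 = 4 * Real.cos θ ^ 2 := by ring
  rwa [this] at hG

noncomputable def signAltFibPoly (m : ℕ) : Polynomial ℝ :=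
  ∑ j ∈ Finset.range (m / 2 + 1),
    Polynomial.C ((-1 : ℝ) ^ j * ((m - j).choose j : ℝ)) * Polynomial.X ^ (m / 2 - j)

lemma signAltFibPoly_eval (m : ℕ) (s : ℝ) :
    (signAltFibPoly m).eval s = signAltFib m s := by
  simp [signAltFibPoly, signAltFib, Polynomial.eval_finset_sum]

lemma signAltFibPoly_coeff (m : ℕ) (hm : 2 ≤ m) :
    (signAltFibPoly m).coeff (m / 2) = 1 := by
  unfold signAltFibPoly
  rw [Polynomial.finset_sum_coeff]
  have h0 : ∀ j ∈ Finset.range (m / 2 + 1), j ≠ 0 →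
      (Polynomial.C ((-1 : ℝ) ^ j * ((m - j).choose j : ℝ)) *
        Polynomial.X ^ (m / 2 - j)).coeff (m / 2) = 0 := by
    intro j hj hj0
    have hj' : j ≤ m / 2 := by simpa using Nat.lt_succ_iff.1 (Finset.mem_range.1 hj)
    have hne : m / 2 ≠ m / 2 - j := by omega
    rw [Polynomial.coeff_C_mul, Polynomial.coeff_X_pow, if_neg hne, mul_zero]
  rw [Finset.sum_eq_single_of_mem 0 (by simp) h0]
  simp

lemma signAltFibPoly_natDegree_le (m : ℕ) :
    (signAltFibPoly m).natDegree ≤ m / 2 := by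
  unfold signAltFibPoly
  refine le_trans (Polynomial.natDegree_sum_le _ _) ?_
  rw [Finset.fold_max_le]
  constructor
  · omega
  · intro j _
    refine le_trans (Polynomial.natDegree_C_mul_le _ _) ?_
    simp [Polynomial.natDegree_X_pow]

theorem signAltFib_roots (m : ℕ) (hm : 2 ≤ m) :
    {s : ℝ | signAltFib m s = 0} =
      {s : ℝ | ∃ j : ℕ, 1 ≤ j ∧ j ≤ m / 2 ∧ s = 4 * Real.cos (j * π / (m + 1)) ^ 2} := by
  have hn : 1 ≤ m / 2 := by omega
  set f : ℕ → ℝ := fun j => 4 * Real.cos (j * π / (m + 1)) ^ 2 with hf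
  have hm1 : (0:ℝ) < (m:ℝ) + 1 := by positivity
  have hhalf : ∀ b : ℕ, b ≤ m / 2 → (b : ℝ) * π / (m + 1) < π / 2 := by
    intro b hb
    rw [div_lt_div_iff₀ hm1 (by norm_num : (0:ℝ) < 2)]
    have h2b : 2 * b ≤ m := by omega
    have : (2 * b : ℝ) ≤ (m : ℝ) := by exact_mod_cast h2b
    nlinarith [Real.pi_pos]
  have hmono : ∀ a b : ℕ, a < b → b ≤ m / 2 → f b < f a := by
    intro a b hab hb
    have hθa_nonneg : 0 ≤ (a : ℝ) * π / (m + 1) := by positivity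
    have hθb_lt : (b : ℝ) * π / (m + 1) < π / 2 := hhalf b hb
    have hlt : (a : ℝ) * π / (m + 1) < (b : ℝ) * π / (m + 1) := by
      have : (a : ℝ) < b := by exact_mod_cast hab
      have hπ : 0 < π := Real.pi_pos
      gcongr
    have hcoslt : Real.cos ((b : ℝ) * π / (m + 1)) < Real.cos ((a : ℝ) * π / (m + 1)) :=
      Real.cos_lt_cos_of_nonneg_of_le_pi hθa_nonneg (by linarith [Real.pi_pos]) hlt
    have hcosb : 0 < Real.cos ((b : ℝ) * π / (m + 1)) := by
      apply Real.cos_pos_of_mem_Ioo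
      have hpb : 0 ≤ (b : ℝ) * π / (m + 1) := by have := Real.pi_pos; positivity
      exact ⟨by linarith [Real.pi_pos], hθb_lt⟩
    simp only [hf]
    nlinarith
  have hP0 : signAltFibPoly m ≠ 0 := by
    intro h
    have := signAltFibPoly_coeff m hm
    rw [h] at this
    simp at this
  have hdeg : (signAltFibPoly m).natDegree = m / 2 := by
    refine le_antisymm (signAltFibPoly_natDegree_le m) ?_
    apply Polynomial.le_natDegree_of_ne_zero
    rw [signAltFibPoly_coeff m hm]
    exact one_ne_zero
  set T : Finset ℝ := (Finset.Icc 1 (m / 2)).image f with hT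
  have hinj : Set.InjOn f (Finset.Icc 1 (m / 2)) := by
    intro a ha b hb hab
    simp only [Finset.coe_Icc, Set.mem_Icc] at ha hb
    by_contra hne
    rcases Nat.lt_or_ge a b with h | h
    · exact absurd hab (ne_of_gt (hmono a b h hb.2))
    · have h' : b < a := by omega
      exact absurd hab (ne_of_lt (hmono b a h' ha.2))
  have hcardT : T.card = m / 2 := by
    rw [hT, Finset.card_image_of_injOn hinj, Nat.card_Icc]
    omega
  have hTsub : T ⊆ (signAltFibPoly m).roots.toFinset := by
    intro s hs
    rw [hT, Finset.mem_image] at hs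
    obtain ⟨j, hj, rfl⟩ := hs
    rw [Finset.mem_Icc] at hj
    rw [Multiset.mem_toFinset, Polynomial.mem_roots hP0]
    rw [Polynomial.IsRoot, signAltFibPoly_eval]; exact signAltFib_root m j hj.1 hj.2
  have hcardroots : (signAltFibPoly m).roots.toFinset.card ≤ m / 2 := by
    refine le_trans (Multiset.toFinset_card_le _) ?_
    refine le_trans (Polynomial.card_roots' _) ?_
    rw [hdeg]
  have hTeq : T = (signAltFibPoly m).roots.toFinset :=
    Finset.eq_of_subset_of_card_le hTsub (by omega)
  ext s
  simp only [Set.mem_setOf_eq]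
  constructor
  · intro hs
    have hsr : s ∈ (signAltFibPoly m).roots.toFinset := by
      rw [Multiset.mem_toFinset, Polynomial.mem_roots hP0]
      rwa [Polynomial.IsRoot, signAltFibPoly_eval]
    rw [← hTeq, hT, Finset.mem_image] at hsr
    obtain ⟨j, hj, rfl⟩ := hsr
    rw [Finset.mem_Icc] at hj
    exact ⟨j, hj.1, hj.2, rfl⟩
  · rintro ⟨j, h1, h2, rfl⟩
    exact signAltFib_root m j h1 h2
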